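/- Let a₋₁ > 0, a₀ ≥ 0, a₁ ≥ 0, a₂ > 0, b ≥ 0, δ ≥ 0, λ ≥ 0, ρ > 1, γ > 1 and 0 < θ < 1. Then there exists a constant K₁ > 0 such that for all y > 0: LV(y) + λ·(V(y + δy) − V(y)) ≤ K₁, i.e. θ(y^{θ−1} − y^{−1})·(a₋₁y^{−1} − a₀ + a₁y − a₂y^{γ}) + (b²θ/2)·((θ−1)y^{θ+2ρ−2} + y^{2ρ−2}) + λ·(((1+δ)^θ − 1)·y^θ − θ·log(1+δ)) ≤ K₁. -/

import Mathlib

set_option maxHeartbeats 1000000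

open Real Filter Topology

/-- L₀: the generator expression without the diffusion part. -/
noncomputable def aitL0 (am1 a₀ a₁ a₂ δ lam γ θ y : ℝ) : ℝ :=
  θ * (y ^ (θ - 1) - y⁻¹) * (am1 * y⁻¹ - a₀ + a₁ * y - a₂ * y ^ γ)
    + lam * (((1 + δ) ^ θ - 1) * y ^ θ - θ * Real.log (1 + δ))

/-- rescaled version near `+∞`. -/
noncomputable def aitHp (am1 a₀ a₁ a₂ δ lam γ θ y : ℝ) : ℝ :=
  θ * (1 - y ^ (-θ)) * (am1 * y ^ (-(γ+1)) - a₀ * y ^ (-γ) + a₁ * y ^ (-(γ-1)) - a₂)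
    + lam * ((1 + δ) ^ θ - 1) * y ^ (-(γ-1))

/-- rescaled version near `0`. -/
noncomputable def aitHm (am1 a₀ a₁ a₂ δ lam γ θ y : ℝ) : ℝ :=
  θ * (y ^ θ - 1) * (am1 - a₀ * y + a₁ * y ^ 2 - a₂ * y ^ (γ+1))
    + lam * ((1 + δ) ^ θ - 1) * y ^ (θ+2)

lemma aitId1 (am1 a₀ a₁ a₂ δ lam γ θ : ℝ) {y : ℝ} (hy : 0 < y) :
    aitL0 am1 a₀ a₁ a₂ δ lam γ θ y
      = y ^ (θ + γ - 1) * aitHp am1 a₀ a₁ a₂ δ lam γ θ y - lam * θ * Real.log (1 + δ) := by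
  obtain ⟨t, rfl⟩ : ∃ t, y = Real.exp t := ⟨Real.log y, (Real.exp_log hy).symm⟩
  unfold aitL0 aitHp
  simp only [Real.rpow_def_of_pos (Real.exp_pos t), Real.log_exp, mul_sub, mul_add, mul_neg,
    mul_one, sub_eq_add_neg, neg_add, neg_neg, Real.exp_add, Real.exp_neg]
  field_simp
  ring

lemma aitId2 (am1 a₀ a₁ a₂ δ lam γ θ : ℝ) {y : ℝ} (hy : 0 < y) :
    aitL0 am1 a₀ a₁ a₂ δ lam γ θ y
      = y ^ (-(2:ℝ)) * aitHm am1 a₀ a₁ a₂ δ lam γ θ y - lam * θ * Real.log (1 + δ) := by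
  obtain ⟨t, rfl⟩ : ∃ t, y = Real.exp t := ⟨Real.log y, (Real.exp_log hy).symm⟩
  unfold aitL0 aitHm
  have h2 : Real.exp (t * 2) = Real.exp t * Real.exp t := by
    rw [show t * 2 = t + t by ring, Real.exp_add]
  simp only [Real.rpow_def_of_pos (Real.exp_pos t), Real.log_exp, mul_sub, mul_add, mul_neg,
    mul_one, sub_eq_add_neg, neg_add, neg_neg, Real.exp_add, Real.exp_neg, h2]
  field_simp
  ring

lemma aitHp_tendsto (am1 a₀ a₁ a₂ δ lam γ θ : ℝ) (hγ : 1 < γ) (hθ0 : 0 < θ) :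
    Tendsto (aitHp am1 a₀ a₁ a₂ δ lam γ θ) atTop (𝓝 (-(θ * a₂))) := by
  have h : ∀ c : ℝ, 0 < c → Tendsto (fun y : ℝ => y ^ (-c)) atTop (𝓝 0) :=
    fun c hc => tendsto_rpow_neg_atTop hc
  have A : Tendsto (aitHp am1 a₀ a₁ a₂ δ lam γ θ) atTop
      (𝓝 ((θ * (1 - 0)) * (am1 * 0 - a₀ * 0 + a₁ * 0 - a₂) + lam * ((1 + δ) ^ θ - 1) * 0)) := by
    unfold aitHp
    exact (((tendsto_const_nhds.sub (h θ hθ0)).const_mul θ).mul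
      ((((((h (γ+1) (by linarith)).const_mul am1).sub
        ((h γ (by linarith)).const_mul a₀)).add
        ((h (γ-1) (by linarith)).const_mul a₁)).sub tendsto_const_nhds))).add
      ((h (γ-1) (by linarith)).const_mul (lam * ((1 + δ) ^ θ - 1)))
  have e : (θ * (1 - 0)) * (am1 * 0 - a₀ * 0 + a₁ * 0 - a₂) + lam * ((1 + δ) ^ θ - 1) * 0
      = -(θ * a₂) := by ring
  rwa [e] at A

lemma aitHm_tendsto (am1 a₀ a₁ a₂ δ lam γ θ : ℝ) (hγ : 1 < γ) (hθ0 : 0 < θ) :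
    Tendsto (aitHm am1 a₀ a₁ a₂ δ lam γ θ) (𝓝[>] (0:ℝ)) (𝓝 (-(θ * am1))) := by
  have h : ∀ c : ℝ, 0 < c → Tendsto (fun y : ℝ => y ^ c) (𝓝[>] (0:ℝ)) (𝓝 0) := by
    intro c hc
    have h1 : ContinuousAt (fun y : ℝ => y ^ c) 0 :=
      Real.continuousAt_rpow_const 0 c (Or.inr hc.le)
    have h2 := h1.tendsto
    rw [Real.zero_rpow hc.ne'] at h2
    exact h2.mono_left nhdsWithin_le_nhds
  have hid : Tendsto (fun y : ℝ => y) (𝓝[>] (0:ℝ)) (𝓝 0) :=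
    tendsto_id.mono_left nhdsWithin_le_nhds
  have hsq : Tendsto (fun y : ℝ => y ^ 2) (𝓝[>] (0:ℝ)) (𝓝 0) := by
    have := hid.mul hid
    rw [mul_zero] at this
    exact this.congr (by intro x; ring)
  have A : Tendsto (aitHm am1 a₀ a₁ a₂ δ lam γ θ) (𝓝[>] (0:ℝ))
      (𝓝 ((θ * ((0:ℝ) - 1)) * (am1 - a₀ * 0 + a₁ * 0 - a₂ * 0) + lam * ((1 + δ) ^ θ - 1) * 0)) := by
    unfold aitHm
    exact ((((h θ hθ0).sub tendsto_const_nhds).const_mul θ).mul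
      (((tendsto_const_nhds.sub (hid.const_mul a₀)).add (hsq.const_mul a₁)).sub
        ((h (γ+1) (by linarith)).const_mul a₂))).add
      ((h (θ+2) (by linarith)).const_mul (lam * ((1 + δ) ^ θ - 1)))
  have e : (θ * ((0:ℝ) - 1)) * (am1 - a₀ * 0 + a₁ * 0 - a₂ * 0) + lam * ((1 + δ) ^ θ - 1) * 0
      = -(θ * am1) := by ring
  rwa [e] at A

theorem ait_sahalia_generator_bound
    (am1 a₀ a₁ a₂ b δ lam ρ γ θ : ℝ)
    (ham1 : 0 < am1) (ha₀ : 0 ≤ a₀) (ha₁ : 0 ≤ a₁) (ha₂ : 0 < a₂)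
    (hb : 0 ≤ b) (hδ : 0 ≤ δ) (hlam : 0 ≤ lam)
    (hρ : 1 < ρ) (hγ : 1 < γ) (hθ0 : 0 < θ) (hθ1 : θ < 1) :
    ∃ K₁ : ℝ, 0 < K₁ ∧ ∀ y : ℝ, 0 < y →
      θ * (y ^ (θ - 1) - y⁻¹) * (am1 * y⁻¹ - a₀ + a₁ * y - a₂ * y ^ γ)
        + (b ^ 2 * θ / 2) * ((θ - 1) * y ^ (θ + 2 * ρ - 2) + y ^ (2 * ρ - 2))
        + lam * (((1 + δ) ^ θ - 1) * y ^ θ - θ * Real.log (1 + δ)) ≤ K₁ := by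
  set L : ℝ → ℝ := fun y =>
      θ * (y ^ (θ - 1) - y⁻¹) * (am1 * y⁻¹ - a₀ + a₁ * y - a₂ * y ^ γ)
        + (b ^ 2 * θ / 2) * ((θ - 1) * y ^ (θ + 2 * ρ - 2) + y ^ (2 * ρ - 2))
        + lam * (((1 + δ) ^ θ - 1) * y ^ θ - θ * Real.log (1 + δ)) with hL
  set L0 : ℝ → ℝ := aitL0 am1 a₀ a₁ a₂ δ lam γ θ with hL0
  -- the split : L = L0 + diffusion part
  have hsplit : ∀ y : ℝ, L y = L0 y
      + (b ^ 2 * θ / 2) * ((θ - 1) * y ^ (θ + 2 * ρ - 2) + y ^ (2 * ρ - 2)) := by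
    intro y; simp only [hL, hL0, aitL0]; ring
  -- L0 tends to -∞ at +∞
  have hL0top : Tendsto L0 atTop atBot := by
    have hmul : Tendsto (fun y : ℝ => y ^ (θ + γ - 1) * aitHp am1 a₀ a₁ a₂ δ lam γ θ y)
        atTop atBot :=
      (tendsto_rpow_atTop (by linarith)).atTop_mul_neg (by nlinarith)
        (aitHp_tendsto am1 a₀ a₁ a₂ δ lam γ θ hγ hθ0)
    have hmul2 : Tendsto (fun y : ℝ =>
        y ^ (θ + γ - 1) * aitHp am1 a₀ a₁ a₂ δ lam γ θ y + (- (lam * θ * Real.log (1 + δ))))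
        atTop atBot := tendsto_atBot_add_const_right _ _ hmul
    refine hmul2.congr' ?_
    filter_upwards [eventually_gt_atTop (0:ℝ)] with y hy
    rw [← sub_eq_add_neg, ← aitId1 am1 a₀ a₁ a₂ δ lam γ θ hy]
  -- L0 tends to -∞ at 0⁺
  have hL0bot : Tendsto L0 (𝓝[>] (0:ℝ)) atBot := by
    have hinv2 : Tendsto (fun y : ℝ => y ^ (-(2:ℝ))) (𝓝[>] (0:ℝ)) atTop := by
      have h : Tendsto (fun y : ℝ => y⁻¹ * y⁻¹) (𝓝[>] (0:ℝ)) atTop :=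
        tendsto_inv_nhdsGT_zero.atTop_mul_atTop₀ tendsto_inv_nhdsGT_zero
      refine h.congr' ?_
      filter_upwards [self_mem_nhdsWithin] with y hy
      have hy0 : (0:ℝ) < y := hy
      rw [← Real.rpow_neg_one, ← Real.rpow_add hy0]
      norm_num
    have hmul : Tendsto (fun y : ℝ => y ^ (-(2:ℝ)) * aitHm am1 a₀ a₁ a₂ δ lam γ θ y)
        (𝓝[>] (0:ℝ)) atBot :=
      hinv2.atTop_mul_neg (by nlinarith)
        (aitHm_tendsto am1 a₀ a₁ a₂ δ lam γ θ hγ hθ0)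
    have hmul2 : Tendsto (fun y : ℝ =>
        y ^ (-(2:ℝ)) * aitHm am1 a₀ a₁ a₂ δ lam γ θ y + (- (lam * θ * Real.log (1 + δ))))
        (𝓝[>] (0:ℝ)) atBot := tendsto_atBot_add_const_right _ _ hmul
    refine hmul2.congr' ?_
    filter_upwards [self_mem_nhdsWithin] with y hy
    have hy0 : (0:ℝ) < y := hy
    rw [← sub_eq_add_neg, ← aitId2 am1 a₀ a₁ a₂ δ lam γ θ hy0]
  -- L tends to -∞ at +∞
  have hLtop : Tendsto L atTop atBot := by
    refine tendsto_atBot_mono' atTop ?_ hL0top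
    filter_upwards [eventually_ge_atTop (max 1 (((1-θ)⁻¹) ^ θ⁻¹))] with y hy
    have hy1 : (1:ℝ) ≤ y := le_trans (le_max_left _ _) hy
    have hy2 : ((1-θ)⁻¹) ^ θ⁻¹ ≤ y := le_trans (le_max_right _ _) hy
    have hy0 : (0:ℝ) < y := lt_of_lt_of_le one_pos hy1
    have h1θ : (0:ℝ) < 1 - θ := by linarith
    have hyθ : (1-θ)⁻¹ ≤ y ^ θ := by
      calc (1-θ)⁻¹ = (((1-θ)⁻¹) ^ θ⁻¹) ^ θ := by
            rw [← Real.rpow_mul (by positivity), inv_mul_cancel₀ hθ0.ne', Real.rpow_one]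
        _ ≤ y ^ θ := Real.rpow_le_rpow (by positivity) hy2 hθ0.le
    have hpos : (0:ℝ) ≤ y ^ (2 * ρ - 2) := Real.rpow_nonneg hy0.le _
    have hexp : y ^ (θ + 2 * ρ - 2) = y ^ θ * y ^ (2 * ρ - 2) := by
      rw [← Real.rpow_add hy0]; ring_nf
    have hkey : (θ - 1) * y ^ (θ + 2 * ρ - 2) + y ^ (2 * ρ - 2) ≤ 0 := by
      rw [hexp]
      have h2 : (1 - θ) * ((1-θ)⁻¹) = 1 := mul_inv_cancel₀ h1θ.ne'
      nlinarith [mul_le_mul_of_nonneg_left hyθ h1θ.le,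
        mul_le_mul_of_nonneg_right (mul_le_mul_of_nonneg_left hyθ h1θ.le) hpos]
    have hfin : (b ^ 2 * θ / 2) * ((θ - 1) * y ^ (θ + 2 * ρ - 2) + y ^ (2 * ρ - 2)) ≤ 0 :=
      mul_nonpos_of_nonneg_of_nonpos (by positivity) hkey
    rw [hsplit y]
    linarith
  -- L tends to -∞ at 0⁺
  have hLbot : Tendsto L (𝓝[>] (0:ℝ)) atBot := by
    have hL0c : Tendsto (fun y => L0 y + b ^ 2 * θ / 2) (𝓝[>] (0:ℝ)) atBot :=
      tendsto_atBot_add_const_right _ _ hL0bot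
    refine tendsto_atBot_mono' _ ?_ hL0c
    filter_upwards [Ioc_mem_nhdsGT_of_mem (by norm_num : (0:ℝ) ∈ Set.Ico (0:ℝ) 1)]
      with y hy
    have hy0 : (0:ℝ) < y := hy.1
    have hy1 : y ≤ 1 := hy.2
    have h1 : (θ - 1) * y ^ (θ + 2 * ρ - 2) ≤ 0 :=
      mul_nonpos_of_nonpos_of_nonneg (by linarith) (Real.rpow_nonneg hy0.le _)
    have h2 : y ^ (2 * ρ - 2) ≤ 1 := Real.rpow_le_one hy0.le hy1 (by linarith)
    have hcoef : (0:ℝ) ≤ b ^ 2 * θ / 2 := by positivity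
    rw [hsplit y]
    nlinarith [mul_le_mul_of_nonneg_left (add_le_add h1 (le_refl (y ^ (2 * ρ - 2)))) hcoef]
  -- pass to G = L ∘ exp on all of ℝ
  have hGtop : Tendsto (fun x : ℝ => L (Real.exp x)) atTop atBot :=
    hLtop.comp Real.tendsto_exp_atTop
  have hGbot : Tendsto (fun x : ℝ => L (Real.exp x)) atBot atBot :=
    hLbot.comp Real.tendsto_exp_atBot_nhdsGT
  have hGcc : Tendsto (fun x : ℝ => L (Real.exp x)) (cocompact ℝ) atBot := by
    rw [cocompact_eq_atBot_atTop]
    exact tendsto_sup.mpr ⟨hGbot, hGtop⟩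
  have hGcont : Continuous fun x : ℝ => L (Real.exp x) := by
    have hc : ∀ c : ℝ, Continuous fun x : ℝ => Real.exp x ^ c := fun c =>
      Real.continuous_exp.rpow_const fun x => Or.inl (Real.exp_ne_zero x)
    have hinv : Continuous fun x : ℝ => (Real.exp x)⁻¹ :=
      Real.continuous_exp.inv₀ fun x => Real.exp_ne_zero x
    simp only [hL]
    exact (((continuous_const.mul ((hc _).sub hinv)).mul
        ((((continuous_const.mul hinv).sub continuous_const).add
          (continuous_const.mul Real.continuous_exp)).sub
          (continuous_const.mul (hc _)))).add
      (continuous_const.mul ((continuous_const.mul (hc _)).add (hc _)))).add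
      (continuous_const.mul ((continuous_const.mul (hc _)).sub continuous_const))
  obtain ⟨x₀, hx₀⟩ := hGcont.exists_forall_ge hGcc
  refine ⟨max (L (Real.exp x₀)) 0 + 1, by positivity, fun y hy => ?_⟩
  have h1 : L y ≤ L (Real.exp x₀) := by
    have := hx₀ (Real.log y)
    rwa [Real.exp_log hy] at this
  have h2 : L (Real.exp x₀) ≤ max (L (Real.exp x₀)) 0 := le_max_left _ _
  calc θ * (y ^ (θ - 1) - y⁻¹) * (am1 * y⁻¹ - a₀ + a₁ * y - a₂ * y ^ γ)
        + (b ^ 2 * θ / 2) * ((θ - 1) * y ^ (θ + 2 * ρ - 2) + y ^ (2 * ρ - 2))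
        + lam * (((1 + δ) ^ θ - 1) * y ^ θ - θ * Real.log (1 + δ)) = L y := rfl
    _ ≤ max (L (Real.exp x₀)) 0 + 1 := by linarith
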